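/- Let a < b be coprime positive integers, and let t = j/(a+b), t' = j'/(a+b) with integers 0 < j, j' < a+b and j ≠ j'. Then γ_{a,b}(t) = γ_{a,b}(t') if and only if j + j' = a + b. -/

import Mathlib

open Complex

theorem gamma_self_intersect_real_axis (a b : ℕ) (ha : 0 < a) (hab : a < b)
    (hcop : Nat.gcd a b = 1) (j j' : ℕ) (hj : 0 < j) (hj' : 0 < j')
    (hjb : j < a + b) (hj'b : j' < a + b) (hne : j ≠ j') :
    (Complex.exp (2 * Real.pi * Complex.I * (a : ℂ) * ((j : ℂ) / ((a : ℂ) + b))) +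
        Complex.exp (2 * Real.pi * Complex.I * (b : ℂ) * ((j : ℂ) / ((a : ℂ) + b))) =
      Complex.exp (2 * Real.pi * Complex.I * (a : ℂ) * ((j' : ℂ) / ((a : ℂ) + b))) +
        Complex.exp (2 * Real.pi * Complex.I * (b : ℂ) * ((j' : ℂ) / ((a : ℂ) + b)))) ↔
    j + j' = a + b := by
  have hπ : (Real.pi : ℂ) ≠ 0 := by exact_mod_cast Real.pi_ne_zero
  have h2π : (2 : ℂ) * Real.pi ≠ 0 := by simp [hπ]
  have hnC : ((a : ℂ) + b) ≠ 0 := by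
    have : ((a + b : ℕ) : ℂ) ≠ 0 := Nat.cast_ne_zero.mpr (by omega)
    push_cast at this; exact this
  -- coprimality of a and a + b over ℤ
  have hcop' : IsCoprime ((a + b : ℕ) : ℤ) (a : ℤ) := by
    rw [Nat.isCoprime_iff_coprime, Nat.add_comm]
    exact Nat.coprime_add_self_left.mpr (Nat.coprime_comm.mp hcop)
  -- rewrite each side as 2 * cos
  have key : ∀ m : ℕ,
      Complex.exp (2 * Real.pi * Complex.I * (a : ℂ) * ((m : ℂ) / ((a : ℂ) + b))) +
        Complex.exp (2 * Real.pi * Complex.I * (b : ℂ) * ((m : ℂ) / ((a : ℂ) + b))) =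
      2 * Complex.cos (2 * Real.pi * a * m / ((a : ℂ) + b)) := by
    intro m
    have h1 : (2 * (Real.pi : ℂ) * Complex.I * a * ((m : ℂ) / ((a : ℂ) + b))) =
        (2 * Real.pi * a * m / ((a : ℂ) + b)) * Complex.I := by ring
    have h2 : (2 * (Real.pi : ℂ) * Complex.I * b * ((m : ℂ) / ((a : ℂ) + b))) =
        (m : ℂ) * (2 * Real.pi * Complex.I) +
          (-(2 * Real.pi * a * m / ((a : ℂ) + b))) * Complex.I := by
      field_simp
      ring
    have h3 : Complex.exp ((m : ℂ) * (2 * Real.pi * Complex.I)) = 1 := by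
      exact_mod_cast Complex.exp_int_mul_two_pi_mul_I (m : ℤ)
    rw [h1, h2, Complex.exp_add, h3, one_mul, Complex.cos]
    ring
  rw [key j, key j', mul_right_inj' (two_ne_zero), Complex.cos_eq_cos_iff]
  constructor
  · rintro ⟨k, hk | hk⟩
    · -- a * j' = k * (a + b) + a * j, impossible
      exfalso
      have h5 := congrArg (fun z => z * ((a : ℂ) + b)) hk
      simp only [add_mul, div_mul_cancel₀ _ hnC] at h5
      have h6 : (a : ℂ) * j' = k * ((a : ℂ) + b) + a * j := by
        apply mul_left_cancel₀ h2π
        linear_combination h5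
      have h7 : (a : ℤ) * j' = k * ((a : ℤ) + b) + a * j := by exact_mod_cast h6
      have hdvd : ((a + b : ℕ) : ℤ) ∣ (a : ℤ) * ((j' : ℤ) - j) := by
        refine ⟨k, ?_⟩
        push_cast
        linear_combination h7
      have hdvd2 : ((a + b : ℕ) : ℤ) ∣ ((j' : ℤ) - j) :=
        hcop'.dvd_of_dvd_mul_left hdvd
      have := Int.eq_zero_of_abs_lt_dvd hdvd2 (abs_lt.mpr ⟨by push_cast; omega, by push_cast; omega⟩)
      omega
    · -- a * j' = k * (a + b) - a * j, so (a+b) ∣ j + j'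
      have h5 := congrArg (fun z => z * ((a : ℂ) + b)) hk
      simp only [sub_mul, div_mul_cancel₀ _ hnC] at h5
      have h6 : (a : ℂ) * j' = k * ((a : ℂ) + b) - a * j := by
        apply mul_left_cancel₀ h2π
        linear_combination h5
      have h7 : (a : ℤ) * j' = k * ((a : ℤ) + b) - a * j := by exact_mod_cast h6
      have hdvd : ((a + b : ℕ) : ℤ) ∣ (a : ℤ) * ((j : ℤ) + j') := by
        refine ⟨k, ?_⟩
        push_cast
        linear_combination h7
      have hdvd2 : ((a + b : ℕ) : ℤ) ∣ ((j : ℤ) + j') :=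
        hcop'.dvd_of_dvd_mul_left hdvd
      have hdvdN : (a + b) ∣ (j + j') := by exact_mod_cast hdvd2
      obtain ⟨c, hc⟩ := hdvdN
      have hc2 : c < 2 := by
        by_contra h
        push_neg at h
        have : (a + b) * 2 ≤ (a + b) * c := Nat.mul_le_mul_left _ h
        omega
      have hc1 : c ≠ 0 := by rintro rfl; omega
      have : c = 1 := by omega
      subst this
      omega
  · intro h
    refine ⟨(a : ℤ), Or.inr ?_⟩
    have hC : (j : ℂ) + j' = (a : ℂ) + b := by exact_mod_cast h
    push_cast
    rw [eq_sub_iff_add_eq, ← add_div, div_eq_iff hnC]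
    linear_combination (2 * (Real.pi : ℂ) * a) * hC
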